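/- Let A : Y → X be given via an SVD with singular values σ_n > 0, σ_n → 0, and let T^c_α y = Σ_n (σ_n/(σ_n² + α c_n)) ⟨y, u_n⟩ v_n with weights c_n ≥ c_0 > 0. Then for every y in the domain of the pseudoinverse A† (i.e. Σ_n σ_n^{-2}|⟨y,u_n⟩|² < ∞), ‖A†y − T^c_α y‖_X → 0 as α → 0. -/

import Mathlib

open scoped RealInnerProductSpace Topology

lemma aux_summable_smul {X : Type*}
    [NormedAddCommGroup X] [InnerProductSpace ℝ X] [CompleteSpace X]
    (v : ℕ → X) (hv : Orthonormal ℝ v) (b : ℕ → ℝ)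
    (hb : Summable (fun n => b n ^ 2)) :
    Summable (fun n => b n • v n) := by
  have := (hv.orthogonalFamily.summable_iff_norm_sq_summable b).2
  simp only [LinearIsometry.toSpanSingleton_apply] at this
  apply this
  simpa [Real.norm_eq_abs, sq_abs] using hb

lemma aux_norm_tsum_smul {X : Type*}
    [NormedAddCommGroup X] [InnerProductSpace ℝ X] [CompleteSpace X]
    (v : ℕ → X) (hv : Orthonormal ℝ v) (b : ℕ → ℝ)
    (hb : Summable (fun n => b n ^ 2)) :
    ‖∑' n, b n • v n‖ ^ 2 = ∑' n, b n ^ 2 := by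
  have hs : Summable (fun n => b n • v n) := aux_summable_smul v hv b hb
  have h1 : Filter.Tendsto (fun s : Finset ℕ => ∑ i ∈ s, b i • v i)
      Filter.atTop (𝓝 (∑' n, b n • v n)) := hs.hasSum
  have h2 : Filter.Tendsto (fun s : Finset ℕ => ‖∑ i ∈ s, b i • v i‖ ^ 2)
      Filter.atTop (𝓝 (‖∑' n, b n • v n‖ ^ 2)) :=
    ((continuous_norm.pow 2).tendsto _).comp h1
  have h3 : ∀ s : Finset ℕ, ‖∑ i ∈ s, b i • v i‖ ^ 2 = ∑ i ∈ s, b i ^ 2 := by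
    intro s
    have := hv.orthogonalFamily.norm_sum b s
    simpa [Real.norm_eq_abs, sq_abs, LinearIsometry.toSpanSingleton_apply] using this
  have h4 : Filter.Tendsto (fun s : Finset ℕ => ∑ i ∈ s, b i ^ 2)
      Filter.atTop (𝓝 (‖∑' n, b n • v n‖ ^ 2)) := by
    refine h2.congr fun s => h3 s
  exact tendsto_nhds_unique h4 hb.hasSum

/-- for the spectral filtering operator
`T^c_α y = Σ_n (σ_n/(σ_n² + α c_n)) ⟨y, u_n⟩ v_n` with weights `c_n ≥ c_0 > 0`,
and every `y` in the domain of the pseudoinverse `A†` (Picard criterion),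
`‖A†y − T^c_α y‖ → 0` as `α → 0⁺`. -/
theorem stmt9
    {X Y : Type*}
    [NormedAddCommGroup X] [InnerProductSpace ℝ X] [CompleteSpace X]
    [NormedAddCommGroup Y] [InnerProductSpace ℝ Y] [CompleteSpace Y]
    (u : ℕ → Y) (v : ℕ → X) (hu : Orthonormal ℝ u) (hv : Orthonormal ℝ v)
    (σ : ℕ → ℝ) (hσpos : ∀ n, 0 < σ n) (hσanti : Antitone σ)
    (hσ0 : Filter.Tendsto σ Filter.atTop (nhds 0))
    (c : ℕ → ℝ) (c₀ : ℝ) (hc₀ : 0 < c₀) (hc : ∀ n, c₀ ≤ c n)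
    (y : Y)
    (hy : Summable (fun n => (σ n)⁻¹ ^ 2 * ⟪y, u n⟫ ^ 2)) :
    Filter.Tendsto
      (fun α : ℝ =>
        ‖(∑' n, ((σ n)⁻¹ * ⟪y, u n⟫) • v n) -
          ∑' n, ((σ n / ((σ n) ^ 2 + α * c n)) * ⟪y, u n⟫) • v n‖)
      (𝓝[>] (0 : ℝ)) (𝓝 0) := by
  set a : ℕ → ℝ := fun n => (σ n)⁻¹ * ⟪y, u n⟫ with ha
  set f : ℝ → ℕ → ℝ := fun α n => (σ n / ((σ n) ^ 2 + α * c n)) * ⟪y, u n⟫ with hf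
  have ha2 : Summable (fun n => a n ^ 2) := by
    refine hy.congr fun n => ?_
    rw [ha]; ring
  -- bound on coefficients for α > 0
  have hb : ∀ α : ℝ, 0 < α → ∀ n, 0 ≤ σ n / ((σ n) ^ 2 + α * c n) ∧
      σ n / ((σ n) ^ 2 + α * c n) ≤ (σ n)⁻¹ := by
    intro α hα n
    have hσn := hσpos n
    have hden : 0 < (σ n) ^ 2 + α * c n := by
      have : 0 < α * c n := mul_pos hα (lt_of_lt_of_le hc₀ (hc n))
      positivity
    constructor
    · positivity
    · rw [div_le_iff₀ hden]
      have h : (σ n)⁻¹ * ((σ n) ^ 2 + α * c n) = σ n + (σ n)⁻¹ * (α * c n) := by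
        field_simp
      rw [h]
      nlinarith [mul_pos (inv_pos.mpr hσn) (mul_pos hα (lt_of_lt_of_le hc₀ (hc n)))]
  have hcoef : ∀ α : ℝ, 0 < α → ∀ n, |a n - f α n| ≤ |a n| := by
    intro α hα n
    obtain ⟨h2, h1⟩ := hb α hα n
    have hσn := hσpos n
    have hkey : a n - f α n = ((σ n)⁻¹ - σ n / ((σ n) ^ 2 + α * c n)) * ⟪y, u n⟫ := by
      rw [ha, hf]; ring
    have h3 : |(σ n)⁻¹ - σ n / ((σ n) ^ 2 + α * c n)| ≤ |(σ n)⁻¹| := by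
      rw [abs_of_nonneg (by linarith : (0:ℝ) ≤ (σ n)⁻¹ - σ n / ((σ n) ^ 2 + α * c n)),
        abs_of_nonneg (inv_pos.mpr hσn).le]
      linarith
    rw [hkey, ha, abs_mul, abs_mul]
    exact mul_le_mul_of_nonneg_right h3 (abs_nonneg _)
  have hfle : ∀ α : ℝ, 0 < α → ∀ n, |f α n| ≤ |a n| := by
    intro α hα n
    obtain ⟨h2, h1⟩ := hb α hα n
    have hσn := hσpos n
    rw [hf, ha, abs_mul, abs_mul]
    refine mul_le_mul_of_nonneg_right ?_ (abs_nonneg _)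
    rw [abs_of_nonneg h2, abs_of_nonneg (inv_pos.mpr hσn).le]
    exact h1
  have hf2 : ∀ α : ℝ, 0 < α → Summable (fun n => f α n ^ 2) := by
    intro α hα
    refine Summable.of_nonneg_of_le (fun n => sq_nonneg _) (fun n => ?_) ha2
    calc f α n ^ 2 = |f α n| ^ 2 := (sq_abs _).symm
      _ ≤ |a n| ^ 2 := pow_le_pow_left₀ (abs_nonneg _) (hfle α hα n) 2
      _ = a n ^ 2 := sq_abs _
  have hg2 : ∀ α : ℝ, 0 < α → Summable (fun n => (a n - f α n) ^ 2) := by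
    intro α hα
    refine Summable.of_nonneg_of_le (fun n => sq_nonneg _) (fun n => ?_) ha2
    calc (a n - f α n) ^ 2 = |a n - f α n| ^ 2 := (sq_abs _).symm
      _ ≤ |a n| ^ 2 := pow_le_pow_left₀ (abs_nonneg _) (hcoef α hα n) 2
      _ = a n ^ 2 := sq_abs _
  -- the difference rewrites as a single tsum
  have hdiff : ∀ α : ℝ, 0 < α →
      (∑' n, a n • v n) - (∑' n, f α n • v n) = ∑' n, (a n - f α n) • v n := by
    intro α hα
    rw [← Summable.tsum_sub (aux_summable_smul v hv a ha2)
      (aux_summable_smul v hv (f α) (hf2 α hα))]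
    exact tsum_congr fun n => (sub_smul _ _ _).symm
  -- tendsto of the sum of squares by dominated convergence
  have hsq : Filter.Tendsto (fun α : ℝ => ∑' n, (a n - f α n) ^ 2)
      (𝓝[>] (0 : ℝ)) (𝓝 0) := by
    have key : Filter.Tendsto (fun α : ℝ => ∑' n, (a n - f α n) ^ 2)
        (𝓝[>] (0 : ℝ)) (𝓝 (∑' _ : ℕ, (0 : ℝ))) := by
      refine tendsto_tsum_of_dominated_convergence (f := fun α n => (a n - f α n) ^ 2)
        (g := fun _ => (0 : ℝ)) (bound := fun n => a n ^ 2) ha2 ?_ ?_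
      · intro n
        have hσn := hσpos n
        have hden : Filter.Tendsto (fun α : ℝ => (σ n) ^ 2 + α * c n) (𝓝[>] 0)
            (𝓝 ((σ n) ^ 2)) := by
          have : Filter.Tendsto (fun α : ℝ => (σ n) ^ 2 + α * c n) (𝓝 0)
              (𝓝 ((σ n) ^ 2 + 0 * c n)) := by
            exact (tendsto_const_nhds.add ((continuous_id.mul continuous_const).tendsto 0))
          simpa using this.mono_left nhdsWithin_le_nhds
        have hfn : Filter.Tendsto (fun α : ℝ => f α n) (𝓝[>] 0) (𝓝 (a n)) := by
          have hne : (σ n) ^ 2 ≠ 0 := by positivity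
          have := (Filter.Tendsto.div (tendsto_const_nhds (x := σ n)) hden hne).mul
            (tendsto_const_nhds (x := ⟪y, u n⟫))
          have heq : σ n / (σ n) ^ 2 * ⟪y, u n⟫ = a n := by
            rw [ha]; field_simp
          rwa [heq] at this
        have : Filter.Tendsto (fun α : ℝ => a n - f α n) (𝓝[>] 0) (𝓝 0) := by
          simpa using (tendsto_const_nhds (x := a n)).sub hfn
        simpa using this.pow 2
      · filter_upwards [self_mem_nhdsWithin] with α hα n
        have h := hcoef α hα n
        calc ‖(a n - f α n) ^ 2‖ = |a n - f α n| ^ 2 := by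
              rw [Real.norm_eq_abs, abs_pow, sq_abs, ← sq_abs]
          _ ≤ |a n| ^ 2 := pow_le_pow_left₀ (abs_nonneg _) h 2
          _ = a n ^ 2 := sq_abs _
    simpa using key
  -- conclude via sqrt
  have hkey : ∀ᶠ α in 𝓝[>] (0 : ℝ),
      ‖(∑' n, a n • v n) - ∑' n, f α n • v n‖ =
        Real.sqrt (∑' n, (a n - f α n) ^ 2) := by
    filter_upwards [self_mem_nhdsWithin] with α hα
    rw [hdiff α hα, ← aux_norm_tsum_smul v hv _ (hg2 α hα),
      Real.sqrt_sq (norm_nonneg _)]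
  have hlim : Filter.Tendsto (fun α : ℝ => Real.sqrt (∑' n, (a n - f α n) ^ 2))
      (𝓝[>] (0 : ℝ)) (𝓝 0) := by
    have := (Real.continuous_sqrt.tendsto 0).comp hsq
    simpa [Function.comp_def] using this
  exact hlim.congr' (by filter_upwards [hkey] with α h using h.symm)
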